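/- Let k be a field of characteristic 0, V a finite-dimensional k-vector space with a nondegenerate symmetric bilinear form B, Γ a finite subgroup of SO(V,B), and (a_γ)_{γ∈Γ} a family of skew-symmetric bilinear forms on V. Let 𝐇 be the quotient of the smash product T(V)⋊k[Γ] by the relations v₁v₂ − v₂v₁ = Σ_{γ∈Γ} a_γ(v₁,v₂)·γ for v₁,v₂ ∈ V. Fix a basis {v_i} of V with B-dual basis {v^i} and dual basis {v_i*} ⊂ V*, and in 𝐇⊗𝒲(V⊕V*,ω) set D⁻ = Σ_i v_i⊗v_i*, D⁺ = Σ_i v_i⊗v^i. Then [D⁺,D⁻] = −Ω_V⊗1 − (1/2)Σ_{γ∈Γ} γ⊗τ(γ), where Ω_V = Σ_i v^i v_i ∈ 𝐇 and τ(γ) = −2Σ_{i,j} a_γ(v_i,v_j)·v^i v_j* ∈ 𝒲(V⊕V*,ω). -/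

import Mathlib

noncomputable section

open scoped TensorProduct

/-- The defining relation of the Weyl algebra of a symplectic form `ω`. -/
def weylRel (R : Type*) [CommRing R] (U : Type*) [AddCommGroup U] [Module R U]
    (ω : U →ₗ[R] U →ₗ[R] R) : TensorAlgebra R U → TensorAlgebra R U → Prop :=
  fun a b => ∃ u w : U,
    a = TensorAlgebra.ι R u * TensorAlgebra.ι R w ∧
    b = TensorAlgebra.ι R w * TensorAlgebra.ι R u + algebraMap R _ (ω u w)

/-- The Weyl algebra of `(U, ω)`. -/
abbrev WeylAlg (R : Type*) [CommRing R] (U : Type*) [AddCommGroup U] [Module R U]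
    (ω : U →ₗ[R] U →ₗ[R] R) := RingQuot (weylRel R U ω)

/-- The canonical linear map `U → 𝒲(U,ω)`. -/
def weylι (R : Type*) [CommRing R] (U : Type*) [AddCommGroup U] [Module R U]
    (ω : U →ₗ[R] U →ₗ[R] R) : U →ₗ[R] WeylAlg R U ω :=
  (RingQuot.mkAlgHom R (weylRel R U ω)).toLinearMap ∘ₗ TensorAlgebra.ι R

/-- The canonical symplectic form on `V ⊕ V*`: `ω(V,V) = ω(V*,V*) = 0`, `ω(α,v) = α(v)`. -/
def sympForm (R : Type*) [CommRing R] (V : Type*) [AddCommGroup V] [Module R V] :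
    (V × Module.Dual R V) →ₗ[R] (V × Module.Dual R V) →ₗ[R] R :=
  LinearMap.mk₂ R (fun u w => u.2 w.1 - w.2 u.1)
    (by intro m₁ m₂ n; simp; ring)
    (by intro c m n; simp; ring)
    (by intro m n₁ n₂; simp; ring)
    (by intro c m n; simp; ring)

/-- The image of a vector `v ∈ V` in the Weyl algebra `𝒲(V ⊕ V*, ω)`. -/
def wVec (R : Type*) [CommRing R] (V : Type*) [AddCommGroup V] [Module R V] (v : V) :
    WeylAlg R (V × Module.Dual R V) (sympForm R V) :=
  weylι R (V × Module.Dual R V) (sympForm R V) (v, 0)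

/-- The image of a functional `φ ∈ V*` in the Weyl algebra `𝒲(V ⊕ V*, ω)`. -/
def wDual (R : Type*) [CommRing R] (V : Type*) [AddCommGroup V] [Module R V]
    (φ : Module.Dual R V) : WeylAlg R (V × Module.Dual R V) (sympForm R V) :=
  weylι R (V × Module.Dual R V) (sympForm R V) (0, φ)

section Statement9

variable (𝕜 : Type*) [Field 𝕜] [CharZero 𝕜]
variable (V : Type*) [AddCommGroup V] [Module 𝕜 V]
variable (Γ : Subgroup (V ≃ₗ[𝕜] V)) [Fintype ↥Γ]
variable (a : ↥Γ → V →ₗ[𝕜] V →ₗ[𝕜] 𝕜)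

/-- The generator `v ∈ V` inside `T(V × 𝕜[Γ])`. -/
def tVec (v : V) : TensorAlgebra 𝕜 (V × MonoidAlgebra 𝕜 ↥Γ) :=
  TensorAlgebra.ι 𝕜 (v, 0)

/-- The generator `γ ∈ Γ` inside `T(V × 𝕜[Γ])`. -/
def tGrp (γ : ↥Γ) : TensorAlgebra 𝕜 (V × MonoidAlgebra 𝕜 ↥Γ) :=
  TensorAlgebra.ι 𝕜 (0, MonoidAlgebra.single γ 1)

/-- The relations defining `𝐇` as a quotient of the smash product `T(V) ⋊ 𝕜[Γ]`:
the group-algebra relations, the smash-product relations `γ·v·γ⁻¹ = γ(v)`, and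
Drinfeld's relations `[v,w] = Σ_γ a_γ(v,w) γ`. -/
def drinfeldRel : TensorAlgebra 𝕜 (V × MonoidAlgebra 𝕜 ↥Γ) →
    TensorAlgebra 𝕜 (V × MonoidAlgebra 𝕜 ↥Γ) → Prop := fun x y =>
  (∃ γ δ : ↥Γ, x = tGrp 𝕜 V Γ γ * tGrp 𝕜 V Γ δ ∧ y = tGrp 𝕜 V Γ (γ * δ)) ∨
  (x = tGrp 𝕜 V Γ 1 ∧ y = 1) ∨
  (∃ (γ : ↥Γ) (v : V), x = tGrp 𝕜 V Γ γ * tVec 𝕜 V Γ v ∧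
    y = tVec 𝕜 V Γ ((γ : V ≃ₗ[𝕜] V) v) * tGrp 𝕜 V Γ γ) ∨
  (∃ v w : V, x = tVec 𝕜 V Γ v * tVec 𝕜 V Γ w ∧
    y = tVec 𝕜 V Γ w * tVec 𝕜 V Γ v + ∑ γ : ↥Γ, a γ v w • tGrp 𝕜 V Γ γ)

/-- Drinfeld's degenerate Hecke algebra `𝐇`. -/
abbrev DrinfeldAlg := RingQuot (drinfeldRel 𝕜 V Γ a)

/-- The image of `v ∈ V` in `𝐇`. -/
def hVec (v : V) : DrinfeldAlg 𝕜 V Γ a :=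
  RingQuot.mkAlgHom 𝕜 (drinfeldRel 𝕜 V Γ a) (tVec 𝕜 V Γ v)

/-- The image of `γ ∈ Γ` in `𝐇`. -/
def hGrp (γ : ↥Γ) : DrinfeldAlg 𝕜 V Γ a :=
  RingQuot.mkAlgHom 𝕜 (drinfeldRel 𝕜 V Γ a) (tGrp 𝕜 V Γ γ)

lemma wcomm (v : V) (φ : Module.Dual 𝕜 V) :
    wDual 𝕜 V φ * wVec 𝕜 V v
      = wVec 𝕜 V v * wDual 𝕜 V φ
        + algebraMap 𝕜 (WeylAlg 𝕜 (V × Module.Dual 𝕜 V) (sympForm 𝕜 V)) (φ v) := by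
  have h : weylRel 𝕜 (V × Module.Dual 𝕜 V) (sympForm 𝕜 V)
      (TensorAlgebra.ι 𝕜 ((0 : V), φ) * TensorAlgebra.ι 𝕜 (v, (0 : Module.Dual 𝕜 V)))
      (TensorAlgebra.ι 𝕜 (v, (0 : Module.Dual 𝕜 V)) * TensorAlgebra.ι 𝕜 ((0 : V), φ)
        + algebraMap 𝕜 _ (sympForm 𝕜 V (0, φ) (v, 0))) := ⟨_, _, rfl, rfl⟩
  have h2 := RingQuot.mkAlgHom_rel 𝕜 h
  simp only [map_mul, map_add, AlgHom.commutes] at h2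
  unfold wDual wVec weylι
  simp only [LinearMap.comp_apply, AlgHom.toLinearMap_apply]
  rw [h2]
  congr 1
  simp [sympForm]

lemma hcomm (v w : V) :
    hVec 𝕜 V Γ a v * hVec 𝕜 V Γ a w
      = hVec 𝕜 V Γ a w * hVec 𝕜 V Γ a v + ∑ γ : ↥Γ, a γ v w • hGrp 𝕜 V Γ a γ := by
  have h : drinfeldRel 𝕜 V Γ a
      (tVec 𝕜 V Γ v * tVec 𝕜 V Γ w)
      (tVec 𝕜 V Γ w * tVec 𝕜 V Γ v + ∑ γ : ↥Γ, a γ v w • tGrp 𝕜 V Γ γ) :=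
    Or.inr (Or.inr (Or.inr ⟨v, w, rfl, rfl⟩))
  have h2 := RingQuot.mkAlgHom_rel 𝕜 h
  simp only [map_mul, map_add, map_sum, map_smul] at h2
  unfold hVec hGrp
  exact h2

/-- `hVec` as a linear map. -/
def hVecL : V →ₗ[𝕜] DrinfeldAlg 𝕜 V Γ a :=
  (RingQuot.mkAlgHom 𝕜 (drinfeldRel 𝕜 V Γ a)).toLinearMap ∘ₗ
    ((TensorAlgebra.ι 𝕜).comp (LinearMap.inl 𝕜 V (MonoidAlgebra 𝕜 ↥Γ)))

lemma hVec_eq_hVecL (v : V) : hVec 𝕜 V Γ a v = hVecL 𝕜 V Γ a v := rfl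

lemma hVec_repr {ι : Type} [Fintype ι] (bv : Module.Basis ι 𝕜 V) (x : V) :
    hVec 𝕜 V Γ a x = ∑ j, bv.coord j x • hVec 𝕜 V Γ a (bv j) := by
  simp only [hVec_eq_hVecL]
  conv_lhs => rw [← bv.sum_repr x]
  simp only [map_sum, map_smul, Module.Basis.coord_apply]

set_option maxHeartbeats 2000000 in
/-- In `𝐇 ⊗ 𝒲(V⊕V*,ω)`,
`[D⁺,D⁻] = −Ω_V ⊗ 1 − (1/2) Σ_γ γ ⊗ τ(γ)`, where `Ω_V = Σ_i v^i v_i` and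
`τ(γ) = −2 Σ_{i,j} a_γ(v_i,v_j) v^i v_j*`. -/
theorem statement9
    (B : LinearMap.BilinForm 𝕜 V)
    (hBsymm : ∀ u w, B u w = B w u)
    (hBnondeg : ∀ u, (∀ w, B u w = 0) → u = 0)
    (hΓB : ∀ γ : ↥Γ, ∀ u w, B ((γ : V ≃ₗ[𝕜] V) u) ((γ : V ≃ₗ[𝕜] V) w) = B u w)
    (hΓdet : ∀ γ : ↥Γ, LinearMap.det ((γ : V ≃ₗ[𝕜] V) : V →ₗ[𝕜] V) = 1)
    (haskew : ∀ γ v, a γ v v = 0)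
    (ι : Type) [Fintype ι] [DecidableEq ι]
    (bv : Module.Basis ι 𝕜 V) (v' : ι → V)
    (hv' : ∀ i j, B (bv i) (v' j) = if i = j then 1 else 0)
    (Dp Dm : DrinfeldAlg 𝕜 V Γ a ⊗[𝕜] WeylAlg 𝕜 (V × Module.Dual 𝕜 V) (sympForm 𝕜 V))
    (hDm : Dm = ∑ i, hVec 𝕜 V Γ a (bv i) ⊗ₜ[𝕜] wDual 𝕜 V (bv.coord i))
    (hDp : Dp = ∑ i, hVec 𝕜 V Γ a (bv i) ⊗ₜ[𝕜] wVec 𝕜 V (v' i))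
    (ΩV : DrinfeldAlg 𝕜 V Γ a)
    (hΩV : ΩV = ∑ i, hVec 𝕜 V Γ a (v' i) * hVec 𝕜 V Γ a (bv i))
    (τ : ↥Γ → WeylAlg 𝕜 (V × Module.Dual 𝕜 V) (sympForm 𝕜 V))
    (hτ : ∀ γ, τ γ = (-2 : 𝕜) • ∑ i, ∑ j,
      a γ (bv i) (bv j) • (wVec 𝕜 V (v' i) * wDual 𝕜 V (bv.coord j))) :
    Dp * Dm - Dm * Dp
      = -(ΩV ⊗ₜ[𝕜] 1) - (1 / 2 : 𝕜) • ∑ γ : ↥Γ, hGrp 𝕜 V Γ a γ ⊗ₜ[𝕜] τ γ := by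
  classical
  subst hDp hDm hΩV
  have e1 : (∑ i, hVec 𝕜 V Γ a (bv i) ⊗ₜ[𝕜] wVec 𝕜 V (v' i)) *
      (∑ i, hVec 𝕜 V Γ a (bv i) ⊗ₜ[𝕜] wDual 𝕜 V (bv.coord i))
      = (∑ i, ∑ j, (hVec 𝕜 V Γ a (bv j) * hVec 𝕜 V Γ a (bv i)) ⊗ₜ[𝕜]
          (wVec 𝕜 V (v' i) * wDual 𝕜 V (bv.coord j)))
        + ∑ i, ∑ j, ∑ γ : ↥Γ, a γ (bv i) (bv j) •
            (hGrp 𝕜 V Γ a γ ⊗ₜ[𝕜] (wVec 𝕜 V (v' i) * wDual 𝕜 V (bv.coord j))) := by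
    rw [Finset.sum_mul_sum, ← Finset.sum_add_distrib]
    refine Finset.sum_congr rfl fun i _ => ?_
    rw [← Finset.sum_add_distrib]
    refine Finset.sum_congr rfl fun j _ => ?_
    rw [Algebra.TensorProduct.tmul_mul_tmul, hcomm 𝕜 V Γ a (bv i) (bv j),
      TensorProduct.add_tmul, TensorProduct.sum_tmul]
    simp only [← TensorProduct.smul_tmul']
  have e2 : (∑ i, hVec 𝕜 V Γ a (bv i) ⊗ₜ[𝕜] wDual 𝕜 V (bv.coord i)) *
      (∑ i, hVec 𝕜 V Γ a (bv i) ⊗ₜ[𝕜] wVec 𝕜 V (v' i))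
      = (∑ i, ∑ j, (hVec 𝕜 V Γ a (bv j) * hVec 𝕜 V Γ a (bv i)) ⊗ₜ[𝕜]
          (wVec 𝕜 V (v' i) * wDual 𝕜 V (bv.coord j)))
        + ∑ i, ∑ j, bv.coord j (v' i) •
            ((hVec 𝕜 V Γ a (bv j) * hVec 𝕜 V Γ a (bv i)) ⊗ₜ[𝕜]
              (1 : WeylAlg 𝕜 (V × Module.Dual 𝕜 V) (sympForm 𝕜 V))) := by
    rw [Finset.sum_mul_sum, Finset.sum_comm, ← Finset.sum_add_distrib]
    refine Finset.sum_congr rfl fun i _ => ?_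
    rw [← Finset.sum_add_distrib]
    refine Finset.sum_congr rfl fun j _ => ?_
    rw [Algebra.TensorProduct.tmul_mul_tmul, wcomm 𝕜 V (v' i) (bv.coord j),
      TensorProduct.tmul_add, Algebra.algebraMap_eq_smul_one, TensorProduct.tmul_smul]
  have e3 : (∑ i, hVec 𝕜 V Γ a (v' i) * hVec 𝕜 V Γ a (bv i)) ⊗ₜ[𝕜]
        (1 : WeylAlg 𝕜 (V × Module.Dual 𝕜 V) (sympForm 𝕜 V))
      = ∑ i, ∑ j, bv.coord j (v' i) •
            ((hVec 𝕜 V Γ a (bv j) * hVec 𝕜 V Γ a (bv i)) ⊗ₜ[𝕜]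
              (1 : WeylAlg 𝕜 (V × Module.Dual 𝕜 V) (sympForm 𝕜 V))) := by
    rw [TensorProduct.sum_tmul]
    refine Finset.sum_congr rfl fun i _ => ?_
    rw [hVec_repr 𝕜 V Γ a bv (v' i), Finset.sum_mul, TensorProduct.sum_tmul]
    refine Finset.sum_congr rfl fun j _ => ?_
    rw [smul_mul_assoc, TensorProduct.smul_tmul']
  have e4 : (1 / 2 : 𝕜) • ∑ γ : ↥Γ, hGrp 𝕜 V Γ a γ ⊗ₜ[𝕜] τ γ
      = - ∑ i, ∑ j, ∑ γ : ↥Γ, a γ (bv i) (bv j) •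
            (hGrp 𝕜 V Γ a γ ⊗ₜ[𝕜] (wVec 𝕜 V (v' i) * wDual 𝕜 V (bv.coord j))) := by
    have swap : ∑ γ : ↥Γ, ∑ i, ∑ j, a γ (bv i) (bv j) •
            (hGrp 𝕜 V Γ a γ ⊗ₜ[𝕜] (wVec 𝕜 V (v' i) * wDual 𝕜 V (bv.coord j)))
        = ∑ i, ∑ j, ∑ γ : ↥Γ, a γ (bv i) (bv j) •
            (hGrp 𝕜 V Γ a γ ⊗ₜ[𝕜] (wVec 𝕜 V (v' i) * wDual 𝕜 V (bv.coord j))) := by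
      rw [Finset.sum_comm]
      exact Finset.sum_congr rfl fun i _ => Finset.sum_comm
    rw [← swap, Finset.smul_sum]
    rw [← Finset.sum_neg_distrib (G := DrinfeldAlg 𝕜 V Γ a ⊗[𝕜] WeylAlg 𝕜 (V × Module.Dual 𝕜 V) (sympForm 𝕜 V))]
    refine Finset.sum_congr rfl fun γ _ => ?_
    rw [hτ, TensorProduct.tmul_smul, smul_smul]
    norm_num
    simp only [TensorProduct.tmul_sum, TensorProduct.tmul_smul]
    exact neg_one_smul 𝕜 (M := DrinfeldAlg 𝕜 V Γ a ⊗[𝕜] WeylAlg 𝕜 (V × Module.Dual 𝕜 V) (sympForm 𝕜 V)) _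
  rw [e1, e2]
  rw [add_sub_add_left_eq_sub (G := DrinfeldAlg 𝕜 V Γ a ⊗[𝕜] WeylAlg 𝕜 (V × Module.Dual 𝕜 V) (sympForm 𝕜 V))]
  rw [e3, e4]
  abel

end Statement9

end
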